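/- Let K1 and K2 be quantum channels (completely positive trace-preserving maps) on density matrices with fixed points ρ1 and ρ2 respectively, and let τ be a positive integer such that for every density matrix ρ, ‖K1^τ[ρ] − ρ1‖₁ ≤ ε. Then ‖ρ1 − ρ2‖₁ ≤ ε + τ·‖K1[ρ2] − ρ2‖₁. -/

import Mathlib

open MeasureTheory Matrix
open scoped ComplexOrder

/-- The trace norm (Schatten 1-norm) of a complex square matrix. -/
noncomputable def traceNorm {n : Type*} [Fintype n] [DecidableEq n] (A : Matrix n n ℂ) : ℝ :=
  (((Matrix.posSemidef_conjTranspose_mul_self A).1.eigenvectorUnitary.1 *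
      Matrix.diagonal (((↑) : ℝ → ℂ) ∘ (√·) ∘ (Matrix.posSemidef_conjTranspose_mul_self A).1.eigenvalues) *
      (star (Matrix.posSemidef_conjTranspose_mul_self A).1.eigenvectorUnitary : Matrix n n ℂ)).trace).re

/-- The operator norm (Schatten ∞-norm) of a complex square matrix. -/
noncomputable def opNorm {n : Type*} [Fintype n] [DecidableEq n] (A : Matrix n n ℂ) : ℝ :=
  ‖Matrix.toEuclideanCLM (𝕜 := ℂ) (n := n) A‖

/-- A density matrix: positive semidefinite with unit trace. -/
def IsDensityMatrix {n : Type*} [Fintype n] [DecidableEq n] (ρ : Matrix n n ℂ) : Prop :=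
  ρ.PosSemidef ∧ ρ.trace = 1

def IsTracePreserving {n : Type*} [Fintype n] [DecidableEq n]
    (Φ : Matrix n n ℂ →ₗ[ℂ] Matrix n n ℂ) : Prop :=
  ∀ A, (Φ A).trace = A.trace

/-- Complete positivity: all finite ampliations map positive semidefinite matrices to
positive semidefinite matrices. -/
def IsCompletelyPositive {n : Type*} [Fintype n] [DecidableEq n]
    (Φ : Matrix n n ℂ →ₗ[ℂ] Matrix n n ℂ) : Prop :=
  ∀ (k : ℕ) (A : Matrix (n × Fin k) (n × Fin k) ℂ), A.PosSemidef →
    (Matrix.of fun (p q : n × Fin k) =>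
      Φ (Matrix.of fun i j => A (i, p.2) (j, q.2)) p.1 q.1).PosSemidef

/-- A quantum channel: completely positive and trace preserving. -/
def IsQuantumChannel {n : Type*} [Fintype n] [DecidableEq n]
    (Φ : Matrix n n ℂ →ₗ[ℂ] Matrix n n ℂ) : Prop :=
  IsCompletelyPositive Φ ∧ IsTracePreserving Φ

/-- The induced 1→1 norm of a superoperator: supremum of trace norms of images of
density matrices. -/
noncomputable def norm11 {n : Type*} [Fintype n] [DecidableEq n]
    (M : Matrix n n ℂ → Matrix n n ℂ) : ℝ :=
  ⨆ ρ : {ρ : Matrix n n ℂ // IsDensityMatrix ρ}, traceNorm (M ρ)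

/-- The induced 1→1 norm of a superoperator: supremum of trace norms of images of the
trace-norm unit ball. -/
noncomputable def norm11Ball {n : Type*} [Fintype n] [DecidableEq n]
    (M : Matrix n n ℂ → Matrix n n ℂ) : ℝ :=
  ⨆ X : {X : Matrix n n ℂ // traceNorm X ≤ 1}, traceNorm (M X)


section AuxTraceNorm

variable {n : Type*} [Fintype n] [DecidableEq n]


lemma traceNorm_eq_cfc (A : Matrix n n ℂ) :
    traceNorm A = (cfc Real.sqrt (Aᴴ * A)).trace.re := by
  rw [Matrix.IsHermitian.cfc_eq (Matrix.posSemidef_conjTranspose_mul_self A).1]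
  rfl

lemma traceNorm_eq_of_sq_eq {A B : Matrix n n ℂ} (h : Aᴴ * A = Bᴴ * B) :
    traceNorm A = traceNorm B := by
  rw [traceNorm_eq_cfc, traceNorm_eq_cfc, h]

lemma traceNorm_neg (A : Matrix n n ℂ) : traceNorm (-A) = traceNorm A :=
  traceNorm_eq_of_sq_eq (by simp)

lemma psd_trace_re_nonneg {A : Matrix n n ℂ} (hA : A.PosSemidef) : 0 ≤ A.trace.re := by
  rw [Matrix.trace, Complex.re_sum]
  refine Finset.sum_nonneg fun i _ => ?_
  have := hA.re_dotProduct_nonneg (Pi.single i 1)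
  simpa [dotProduct, Matrix.mulVec, Pi.single_apply] using this

lemma trace_mul_psd_re_nonneg {A B : Matrix n n ℂ} (hA : A.PosSemidef) (hB : B.PosSemidef) :
    0 ≤ (A * B).trace.re := by
  have hS : cfc Real.sqrt A * cfc Real.sqrt A = A := by
    rw [← cfc_mul Real.sqrt Real.sqrt A]
    conv_rhs => rw [← cfc_id ℝ A (ha := hA.1)]
    refine cfc_congr fun x hx => ?_
    rw [hA.1.spectrum_real_eq_range_eigenvalues] at hx
    obtain ⟨i, rfl⟩ := hx
    exact Real.mul_self_sqrt (hA.eigenvalues_nonneg i)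
  have hSH : (cfc Real.sqrt A).IsHermitian := cfc_predicate Real.sqrt A
  have h1 : A * B = cfc Real.sqrt A * (cfc Real.sqrt A * B) := by
    rw [← mul_assoc, hS]
  rw [h1, Matrix.trace_mul_comm]
  have h2 : cfc Real.sqrt A * B * cfc Real.sqrt A
      = cfc Real.sqrt A * B * (cfc Real.sqrt A)ᴴ := by
    rw [hSH.eq]
  rw [h2]
  exact psd_trace_re_nonneg (hB.mul_mul_conjTranspose_same _)

namespace TNaux
open Matrix

variable {A : Matrix n n ℂ} (hA : A.IsHermitian)

noncomputable def U (hA : A.IsHermitian) : Matrix n n ℂ := (hA.eigenvectorUnitary : Matrix n n ℂ)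

noncomputable def conj (hA : A.IsHermitian) (d : n → ℝ) : Matrix n n ℂ :=
  U hA * diagonal (fun i => (d i : ℂ)) * star (U hA)

lemma star_U_mul_U : star (U hA) * U hA = 1 := by
  simpa [U] using mem_unitaryGroup_iff'.mp (hA.eigenvectorUnitary).2

lemma conj_mul (d e : n → ℝ) : conj hA d * conj hA e = conj hA (d * e) := by
  have h : (fun i => ((d * e) i : ℂ)) = fun i => (d i : ℂ) * (e i : ℂ) :=
    funext fun i => by push_cast [Pi.mul_apply]; ring
  unfold conj
  rw [h, ← diagonal_mul_diagonal]
  simp only [mul_assoc]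
  rw [← mul_assoc (star (U hA)) (U hA), star_U_mul_U hA, one_mul]

lemma conj_sub (d e : n → ℝ) : conj hA d - conj hA e = conj hA (d - e) := by
  have h : (fun i => ((d - e) i : ℂ)) = fun i => (d i : ℂ) - (e i : ℂ) :=
    funext fun i => by push_cast [Pi.sub_apply]; ring
  unfold conj
  rw [h, ← diagonal_sub, ← sub_mul, ← mul_sub]

lemma conj_add (d e : n → ℝ) : conj hA d + conj hA e = conj hA (d + e) := by
  have h : (fun i => ((d + e) i : ℂ)) = fun i => (d i : ℂ) + (e i : ℂ) :=
    funext fun i => by push_cast [Pi.add_apply]; ring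
  unfold conj
  rw [h, ← diagonal_add, ← add_mul, ← mul_add]

lemma conj_posSemidef {d : n → ℝ} (hd : ∀ i, 0 ≤ d i) : (conj hA d).PosSemidef := by
  unfold conj
  rw [Matrix.star_eq_conjTranspose]
  refine Matrix.PosSemidef.mul_mul_conjTranspose_same ?_ _
  refine Matrix.PosSemidef.diagonal fun i => ?_
  simp only [Pi.zero_apply]
  exact_mod_cast hd i

lemma conj_trace_re (d : n → ℝ) : (conj hA d).trace.re = ∑ i, d i := by
  unfold conj
  rw [Matrix.trace_mul_cycle, star_U_mul_U hA, one_mul, Matrix.trace_diagonal]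
  rw [Complex.re_sum]
  simp

lemma conj_eigenvalues : conj hA hA.eigenvalues = A := by
  unfold conj U
  exact hA.spectral_theorem.symm

lemma conj_one : conj hA 1 = 1 := by
  unfold conj
  have : diagonal (fun i : n => ((1 : n → ℝ) i : ℂ)) = 1 := by
    simp [Matrix.diagonal_one]
  rw [this, mul_one]
  simpa [U] using mem_unitaryGroup_iff.mp (hA.eigenvectorUnitary).2

lemma traceNorm_hermitian : traceNorm A = ∑ i, |hA.eigenvalues i| := by
  have habs : (conj hA (fun i => |hA.eigenvalues i|)).PosSemidef :=
    conj_posSemidef hA fun i => abs_nonneg _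
  have hAA : Aᴴ * A = conj hA (hA.eigenvalues * hA.eigenvalues) := by
    rw [hA.eq]
    conv_lhs => rw [← conj_eigenvalues hA]
    rw [conj_mul]
  have hfun : (fun i => |hA.eigenvalues i|) * (fun i => |hA.eigenvalues i|)
      = hA.eigenvalues * hA.eigenvalues := funext fun i => abs_mul_abs_self _
  have hsq : (conj hA (fun i => |hA.eigenvalues i|)) ^ 2 = Aᴴ * A := by
    rw [sq, conj_mul, hfun, hAA]
  have hAA2 : Aᴴ * A = cfc (fun x : ℝ => x * x) A := by
    have hA' : IsSelfAdjoint A := hA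
    rw [cfc_mul (fun x : ℝ => x) (fun x : ℝ => x) A, cfc_id' ℝ A hA', hA.eq]
  have hc : cfc Real.sqrt (Aᴴ * A) = cfc (fun x : ℝ => |x|) A := by
    rw [hAA2]
    refine (cfc_comp Real.sqrt (fun x : ℝ => x * x) A hA).symm.trans ?_
    congr 1
    funext x
    exact Real.sqrt_mul_self_eq_abs x
  rw [traceNorm_eq_cfc, hc, hA.cfc_eq, ← conj_trace_re hA]
  rfl

end TNaux

open TNaux in
lemma traceNorm_le_of_decomp {A P Q : Matrix n n ℂ} (hA : A.IsHermitian)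
    (hP : P.PosSemidef) (hQ : Q.PosSemidef) (hPQ : A = P - Q) :
    traceNorm A ≤ P.trace.re + Q.trace.re := by
  classical
  set s : n → ℝ := fun i => if 0 ≤ hA.eigenvalues i then 1 else -1 with hs
  set B : Matrix n n ℂ := conj hA s with hB
  -- trace (B * A) real part equals traceNorm A
  have hBA : (B * A).trace.re = traceNorm A := by
    have h := conj_mul hA s hA.eigenvalues
    rw [conj_eigenvalues hA] at h
    rw [hB, h, conj_trace_re, traceNorm_hermitian hA]
    refine Finset.sum_congr rfl fun i _ => ?_
    by_cases h : 0 ≤ hA.eigenvalues i <;>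
      simp [hs, Pi.mul_apply, h, abs_of_nonneg, abs_of_neg, lt_of_not_ge, not_le.mp]
  -- 1 - B and 1 + B are PSD
  have h1B : (1 - B : Matrix n n ℂ).PosSemidef := by
    rw [hB, show (1 : Matrix n n ℂ) = conj hA 1 from (conj_one hA).symm, conj_sub]
    refine conj_posSemidef hA fun i => ?_
    by_cases h : 0 ≤ hA.eigenvalues i <;> simp [hs, Pi.sub_apply, h] <;> norm_num
  have h1B' : (1 + B : Matrix n n ℂ).PosSemidef := by
    rw [hB, show (1 : Matrix n n ℂ) = conj hA 1 from (conj_one hA).symm, conj_add]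
    refine conj_posSemidef hA fun i => ?_
    by_cases h : 0 ≤ hA.eigenvalues i <;> simp [hs, Pi.add_apply, h] <;> norm_num
  have hBP : (B * P).trace.re ≤ P.trace.re := by
    have := trace_mul_psd_re_nonneg h1B hP
    rw [sub_mul, one_mul, Matrix.trace_sub, Complex.sub_re] at this
    linarith
  have hBQ : -(Q.trace.re) ≤ (B * Q).trace.re := by
    have := trace_mul_psd_re_nonneg h1B' hQ
    rw [add_mul, one_mul, Matrix.trace_add, Complex.add_re] at this
    linarith
  have hsplit : (B * A).trace.re = (B * P).trace.re - (B * Q).trace.re := by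
    rw [hPQ, mul_sub, Matrix.trace_sub, Complex.sub_re]
  linarith [hBA.symm.le]

open TNaux in
lemma jordan_decomp {A : Matrix n n ℂ} (hA : A.IsHermitian) :
    ∃ P Q : Matrix n n ℂ, P.PosSemidef ∧ Q.PosSemidef ∧ A = P - Q ∧
      P.trace.re + Q.trace.re = traceNorm A := by
  refine ⟨conj hA (fun i => max (hA.eigenvalues i) 0),
    conj hA (fun i => max (-hA.eigenvalues i) 0),
    conj_posSemidef hA fun i => le_max_right _ _,
    conj_posSemidef hA fun i => le_max_right _ _, ?_, ?_⟩
  · have hfun : (fun i => max (hA.eigenvalues i) 0) - (fun i => max (-hA.eigenvalues i) 0)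
        = hA.eigenvalues := by
      funext i
      simp only [Pi.sub_apply]
      rcases le_total 0 (hA.eigenvalues i) with h | h
      · rw [max_eq_left h, max_eq_right (by linarith)]; ring
      · rw [max_eq_right h, max_eq_left (by linarith)]; ring
    rw [conj_sub, hfun, conj_eigenvalues hA]
  · rw [conj_trace_re, conj_trace_re, traceNorm_hermitian hA, ← Finset.sum_add_distrib]
    refine Finset.sum_congr rfl fun i _ => ?_
    rcases le_total 0 (hA.eigenvalues i) with h | h
    · rw [max_eq_left h, max_eq_right (by linarith), abs_of_nonneg h]; ring
    · rw [max_eq_right h, max_eq_left (by linarith), abs_of_nonpos h]; ring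

lemma traceNorm_add_le_of_hermitian {A B : Matrix n n ℂ}
    (hA : A.IsHermitian) (hB : B.IsHermitian) :
    traceNorm (A + B) ≤ traceNorm A + traceNorm B := by
  obtain ⟨P, Q, hP, hQ, hd, ht⟩ := jordan_decomp hA
  obtain ⟨P', Q', hP', hQ', hd', ht'⟩ := jordan_decomp hB
  have h := traceNorm_le_of_decomp (hA.add hB) (hP.add hP') (hQ.add hQ')
    (by rw [hd, hd']; abel)
  rw [Matrix.trace_add, Matrix.trace_add, Complex.add_re, Complex.add_re] at h
  linarith

section chan
variable {K : Matrix n n ℂ →ₗ[ℂ] Matrix n n ℂ}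

lemma channel_psd (hCP : IsCompletelyPositive K) {A : Matrix n n ℂ} (hA : A.PosSemidef) :
    (K A).PosSemidef := by
  have hAt : (A.submatrix (Prod.fst : n × Fin 1 → n) Prod.fst).PosSemidef := hA.submatrix _
  have h := hCP 1 (A.submatrix Prod.fst Prod.fst) hAt
  have heq : (Matrix.of fun (p q : n × Fin 1) =>
      K (Matrix.of fun i j => A.submatrix Prod.fst Prod.fst (i, p.2) (j, q.2)) p.1 q.1)
      = (K A).submatrix (Prod.fst : n × Fin 1 → n) Prod.fst := by
    ext p q
    simp only [Matrix.of_apply, Matrix.submatrix_apply]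
    congr 1
  rw [heq] at h
  have h2 := h.submatrix (fun i : n => ((i, 0) : n × Fin 1))
  have heq2 : ((K A).submatrix (Prod.fst : n × Fin 1 → n) Prod.fst).submatrix
      (fun i : n => ((i, 0) : n × Fin 1)) (fun i : n => ((i, 0) : n × Fin 1)) = K A := by
    ext i j; simp
  rwa [heq2] at h2

lemma channel_herm (hCP : IsCompletelyPositive K) {A : Matrix n n ℂ} (hA : A.IsHermitian) :
    (K A).IsHermitian := by
  obtain ⟨P, Q, hP, hQ, hd, -⟩ := jordan_decomp hA
  rw [hd, map_sub]
  exact ((channel_psd hCP hP).isHermitian).sub ((channel_psd hCP hQ).isHermitian)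

lemma channel_contract (hCP : IsCompletelyPositive K) (hTP : IsTracePreserving K)
    {A : Matrix n n ℂ} (hA : A.IsHermitian) : traceNorm (K A) ≤ traceNorm A := by
  obtain ⟨P, Q, hP, hQ, hd, ht⟩ := jordan_decomp hA
  have h1 : K A = K P - K Q := by rw [hd, map_sub]
  have h2 := traceNorm_le_of_decomp (channel_herm hCP hA)
    (channel_psd hCP hP) (channel_psd hCP hQ) h1
  rw [hTP P, hTP Q] at h2
  linarith

lemma traceNorm_zero : traceNorm (0 : Matrix n n ℂ) = 0 := by
  have h : (0 : Matrix n n ℂ) ^ 2 = (0 : Matrix n n ℂ)ᴴ * 0 := by simp [sq]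
  rw [traceNorm_eq_cfc]
  simp

lemma iter_map_sub (K : Matrix n n ℂ →ₗ[ℂ] Matrix n n ℂ) (m : ℕ) (X Y : Matrix n n ℂ) :
    (⇑K)^[m] X - (⇑K)^[m] Y = (⇑K)^[m] (X - Y) := by
  induction m with
  | zero => simp
  | succ m ih =>
    rw [Function.iterate_succ_apply', Function.iterate_succ_apply',
      Function.iterate_succ_apply', ← map_sub, ih]

lemma iter_psd (hCP : IsCompletelyPositive K) {A : Matrix n n ℂ} (hA : A.PosSemidef) (m : ℕ) :
    ((⇑K)^[m] A).PosSemidef := by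
  induction m with
  | zero => simpa
  | succ m ih => rw [Function.iterate_succ_apply']; exact channel_psd hCP ih

lemma iter_herm (hCP : IsCompletelyPositive K) {A : Matrix n n ℂ} (hA : A.IsHermitian) (m : ℕ) :
    ((⇑K)^[m] A).IsHermitian := by
  induction m with
  | zero => simpa
  | succ m ih => rw [Function.iterate_succ_apply']; exact channel_herm hCP ih

lemma iter_contract (hCP : IsCompletelyPositive K) (hTP : IsTracePreserving K)
    {A : Matrix n n ℂ} (hA : A.IsHermitian) (m : ℕ) :
    traceNorm ((⇑K)^[m] A) ≤ traceNorm A := by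
  induction m with
  | zero => simp
  | succ m ih =>
    rw [Function.iterate_succ_apply']
    exact (channel_contract hCP hTP (iter_herm hCP hA m)).trans ih

lemma telescope_bound (hCP : IsCompletelyPositive K) (hTP : IsTracePreserving K)
    {ρ : Matrix n n ℂ} (hρ : ρ.PosSemidef) (m : ℕ) :
    traceNorm ((⇑K)^[m] ρ - ρ) ≤ m * traceNorm (K ρ - ρ) := by
  have hD : (K ρ - ρ).IsHermitian := ((channel_psd hCP hρ).isHermitian).sub hρ.isHermitian
  induction m with
  | zero => simp [traceNorm_zero]
  | succ m ih =>
    have hsplit : (⇑K)^[m+1] ρ - ρ = ((⇑K)^[m+1] ρ - (⇑K)^[m] ρ) + ((⇑K)^[m] ρ - ρ) := by abel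
    have hstep : (⇑K)^[m+1] ρ - (⇑K)^[m] ρ = (⇑K)^[m] (K ρ - ρ) := by
      rw [← iter_map_sub, Function.iterate_succ_apply]
    have herm1 : ((⇑K)^[m+1] ρ - (⇑K)^[m] ρ).IsHermitian := by
      rw [hstep]; exact iter_herm hCP hD m
    have herm2 : ((⇑K)^[m] ρ - ρ).IsHermitian :=
      (iter_psd hCP hρ m).isHermitian.sub hρ.isHermitian
    calc traceNorm ((⇑K)^[m+1] ρ - ρ)
        ≤ traceNorm ((⇑K)^[m+1] ρ - (⇑K)^[m] ρ) + traceNorm ((⇑K)^[m] ρ - ρ) := by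
          rw [hsplit]; exact traceNorm_add_le_of_hermitian herm1 herm2
      _ ≤ traceNorm (K ρ - ρ) + m * traceNorm (K ρ - ρ) := by
          have := iter_contract hCP hTP hD m
          rw [hstep]
          linarith
      _ = (m + 1 : ℕ) * traceNorm (K ρ - ρ) := by push_cast; ring

end chan

end AuxTraceNorm

theorem fixed_point_distance_bound {n : Type*} [Fintype n] [DecidableEq n]
    (K1 K2 : Matrix n n ℂ →ₗ[ℂ] Matrix n n ℂ)
    (hK1 : IsQuantumChannel K1) (hK2 : IsQuantumChannel K2)
    (ρ1 ρ2 : Matrix n n ℂ) (hρ1 : IsDensityMatrix ρ1) (hρ2 : IsDensityMatrix ρ2)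
    (hfix1 : K1 ρ1 = ρ1) (hfix2 : K2 ρ2 = ρ2)
    (τ : ℕ) (hτ : 0 < τ) (ε : ℝ)
    (hmix : ∀ ρ : Matrix n n ℂ, IsDensityMatrix ρ → traceNorm ((⇑K1)^[τ] ρ - ρ1) ≤ ε) :
    traceNorm (ρ1 - ρ2) ≤ ε + τ * traceNorm (K1 ρ2 - ρ2) := by
  obtain ⟨hCP, hTP⟩ := hK1
  have hτpsd : ((⇑K1)^[τ] ρ2).PosSemidef := iter_psd hCP hρ2.1 τ
  have hA : (ρ1 - (⇑K1)^[τ] ρ2).IsHermitian := hρ1.1.isHermitian.sub hτpsd.isHermitian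
  have hB : ((⇑K1)^[τ] ρ2 - ρ2).IsHermitian := hτpsd.isHermitian.sub hρ2.1.isHermitian
  have h1 : traceNorm (ρ1 - (⇑K1)^[τ] ρ2) ≤ ε := by
    have h := hmix ρ2 hρ2
    rwa [show ρ1 - (⇑K1)^[τ] ρ2 = -((⇑K1)^[τ] ρ2 - ρ1) from (neg_sub _ _).symm,
      traceNorm_neg]
  have h2 := telescope_bound hCP hTP hρ2.1 τ
  have h3 : ρ1 - ρ2 = (ρ1 - (⇑K1)^[τ] ρ2) + ((⇑K1)^[τ] ρ2 - ρ2) := by abel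
  have h4 : traceNorm (ρ1 - ρ2)
      ≤ traceNorm (ρ1 - (⇑K1)^[τ] ρ2) + traceNorm ((⇑K1)^[τ] ρ2 - ρ2) := by
    rw [h3]; exact traceNorm_add_le_of_hermitian hA hB
  linarith
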